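/- For any x*, x ∈ ℝⁿ, the Bregman divergence of the hypentropy potential satisfies ‖x − x*‖₂² ≤ 2 √(max(‖x‖_∞², ‖x*‖_∞²) + β²) · D_Φ(x*, x). -/

import Mathlib

open Finset

open Real

noncomputable def hypf (β t : ℝ) : ℝ := t * Real.arsinh (t / β) - Real.sqrt (t ^ 2 + β ^ 2)

lemma sqrt_one_add (β t : ℝ) (hβ : 0 < β) :
    Real.sqrt (1 + (t / β) ^ 2) = Real.sqrt (t ^ 2 + β ^ 2) / β := by
  rw [show 1 + (t / β) ^ 2 = (t ^ 2 + β ^ 2) / β ^ 2 by field_simp; ring,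
    Real.sqrt_div (by positivity), Real.sqrt_sq (le_of_lt hβ)]

lemma hasDerivAt_arsinh_div (β t : ℝ) (hβ : 0 < β) :
    HasDerivAt (fun s => Real.arsinh (s / β)) ((Real.sqrt (t ^ 2 + β ^ 2))⁻¹) t := by
  have h1 : HasDerivAt (fun s : ℝ => s / β) (1 / β) t := (hasDerivAt_id t).div_const β
  have h2 := (Real.hasDerivAt_arsinh (t / β)).comp t h1
  refine h2.congr_deriv ?_
  symm
  rw [sqrt_one_add β t hβ]
  have hpos : 0 < Real.sqrt (t ^ 2 + β ^ 2) := Real.sqrt_pos.2 (by positivity)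
  field_simp

lemma hasDerivAt_hypf (β t : ℝ) (hβ : 0 < β) :
    HasDerivAt (hypf β) (Real.arsinh (t / β)) t := by
  have hpos : (0:ℝ) < t ^ 2 + β ^ 2 := by positivity
  have hs : HasDerivAt (fun s : ℝ => Real.sqrt (s ^ 2 + β ^ 2))
      (1 / (2 * Real.sqrt (t ^ 2 + β ^ 2)) * (2 * t)) t := by
    have h1 : HasDerivAt (fun s : ℝ => s ^ 2 + β ^ 2) (2 * t) t := by
      simpa using ((hasDerivAt_pow 2 t).add_const (β ^ 2))
    exact (Real.hasDerivAt_sqrt hpos.ne').comp t h1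
  have hm : HasDerivAt (fun s : ℝ => s * Real.arsinh (s / β))
      (1 * Real.arsinh (t / β) + t * (Real.sqrt (t ^ 2 + β ^ 2))⁻¹) t :=
    (hasDerivAt_id t).mul (hasDerivAt_arsinh_div β t hβ)
  have := hm.sub hs
  refine this.congr_deriv ?_
  symm
  have hpos' : 0 < Real.sqrt (t ^ 2 + β ^ 2) := Real.sqrt_pos.2 hpos
  field_simp
  ring

lemma mono_aux (β M : ℝ) (hβ : 0 < β) (hM : 0 ≤ M) :
    MonotoneOn (fun t => Real.arsinh (t / β) - t / Real.sqrt (M + β ^ 2))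
      (Set.Icc (-Real.sqrt M) (Real.sqrt M)) := by
  have hK : (0:ℝ) < Real.sqrt (M + β ^ 2) := Real.sqrt_pos.2 (by positivity)
  have hd : ∀ t : ℝ, HasDerivAt (fun t => Real.arsinh (t / β) - t / Real.sqrt (M + β ^ 2))
      ((Real.sqrt (t ^ 2 + β ^ 2))⁻¹ - (Real.sqrt (M + β ^ 2))⁻¹) t := by
    intro t
    have := (hasDerivAt_arsinh_div β t hβ).sub ((hasDerivAt_id t).div_const (Real.sqrt (M + β ^ 2)))
    exact this.congr_deriv (by rw [one_div])
  apply monotoneOn_of_deriv_nonneg (convex_Icc _ _)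
  · exact Continuous.continuousOn (by
      have : Differentiable ℝ (fun t => Real.arsinh (t / β) - t / Real.sqrt (M + β ^ 2)) :=
        fun t => (hd t).differentiableAt
      exact this.continuous)
  · exact fun t _ => ((hd t).differentiableAt).differentiableWithinAt
  · intro t ht
    rw [interior_Icc] at ht
    rw [(hd t).deriv]
    have ht2 : t ^ 2 ≤ M := by
      have := sq_le_sq' (le_of_lt ht.1) (le_of_lt ht.2)
      rwa [Real.sq_sqrt hM] at this
    have h1 : Real.sqrt (t ^ 2 + β ^ 2) ≤ Real.sqrt (M + β ^ 2) :=
      Real.sqrt_le_sqrt (by linarith)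
    have h2 : (0:ℝ) < Real.sqrt (t ^ 2 + β ^ 2) := Real.sqrt_pos.2 (by positivity)
    have := inv_anti₀ h2 h1
    linarith

lemma key_ineq (β M a b : ℝ) (hβ : 0 < β) (hM : 0 ≤ M) (ha : a ^ 2 ≤ M) (hb : b ^ 2 ≤ M) :
    (a - b) ^ 2 ≤ 2 * Real.sqrt (M + β ^ 2) *
      (hypf β a - hypf β b - Real.arsinh (b / β) * (a - b)) := by
  set K := Real.sqrt (M + β ^ 2) with hKdef
  have hK : (0:ℝ) < K := Real.sqrt_pos.2 (by positivity)
  set G : ℝ → ℝ := fun t => hypf β t - Real.arsinh (b / β) * t - (t - b) ^ 2 / (2 * K) with hG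
  have hdG : ∀ t : ℝ, HasDerivAt G
      (Real.arsinh (t / β) - Real.arsinh (b / β) - (t - b) / K) t := by
    intro t
    have h1 : HasDerivAt (fun t : ℝ => Real.arsinh (b / β) * t) (Real.arsinh (b / β)) t := by
      simpa using (hasDerivAt_id t).const_mul (Real.arsinh (b / β))
    have h2 : HasDerivAt (fun t : ℝ => (t - b) ^ 2 / (2 * K)) ((t - b) / K) t := by
      have := (((hasDerivAt_id t).sub_const b).pow 2).div_const (2 * K)
      refine this.congr_deriv ?_
      symm
      field_simp
      simp only [id]
      ring
    exact ((hasDerivAt_hypf β t hβ).sub h1).sub h2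
  have hmemb : b ∈ Set.Icc (-Real.sqrt M) (Real.sqrt M) := by
    constructor <;> [nlinarith [Real.abs_le_sqrt hb, abs_le.1 (Real.abs_le_sqrt hb)];
      nlinarith [abs_le.1 (Real.abs_le_sqrt hb)]]
  have hmema : a ∈ Set.Icc (-Real.sqrt M) (Real.sqrt M) := by
    have := abs_le.1 (Real.abs_le_sqrt ha)
    exact ⟨this.1, this.2⟩
  have hmono := mono_aux β M hβ hM
  have hGoal : G b ≤ G a := by
    rcases le_total b a with hab | hab
    · have : MonotoneOn G (Set.Icc b (Real.sqrt M)) := by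
        apply monotoneOn_of_deriv_nonneg (convex_Icc _ _)
        · exact Continuous.continuousOn
            (Differentiable.continuous (fun t => (hdG t).differentiableAt))
        · exact fun t _ => ((hdG t).differentiableAt).differentiableWithinAt
        · intro t ht
          rw [interior_Icc] at ht
          rw [(hdG t).deriv]
          have htm : t ∈ Set.Icc (-Real.sqrt M) (Real.sqrt M) :=
            ⟨le_trans hmemb.1 (le_of_lt ht.1), le_of_lt ht.2⟩
          have := hmono hmemb htm (le_of_lt ht.1)
          simp only at this
          have : Real.arsinh (b / β) - b / K ≤ Real.arsinh (t / β) - t / K := this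
          rw [sub_div]
          linarith
      exact this ⟨le_refl b, hmemb.2⟩ ⟨hab, hmema.2⟩ hab
    · have : AntitoneOn G (Set.Icc (-Real.sqrt M) b) := by
        apply antitoneOn_of_deriv_nonpos (convex_Icc _ _)
        · exact Continuous.continuousOn
            (Differentiable.continuous (fun t => (hdG t).differentiableAt))
        · exact fun t _ => ((hdG t).differentiableAt).differentiableWithinAt
        · intro t ht
          rw [interior_Icc] at ht
          rw [(hdG t).deriv]
          have htm : t ∈ Set.Icc (-Real.sqrt M) (Real.sqrt M) :=
            ⟨le_of_lt ht.1, le_trans (le_of_lt ht.2) hmemb.2⟩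
          have := hmono htm hmemb (le_of_lt ht.2)
          simp only at this
          have : Real.arsinh (t / β) - t / K ≤ Real.arsinh (b / β) - b / K := this
          rw [sub_div]
          linarith
      exact this ⟨hmema.1, hab⟩ ⟨hmemb.1, le_refl b⟩ hab
  have := hGoal
  simp only [hG] at this
  have h2K : (0:ℝ) < 2 * K := by linarith
  have h0 : ((b - b) : ℝ) ^ 2 / (2 * K) = 0 := by simp
  have hmul : Real.arsinh (b / β) * (a - b)
      = Real.arsinh (b / β) * a - Real.arsinh (b / β) * b := by ring
  have h3 : (a - b) ^ 2 / (2 * K) ≤ hypf β a - hypf β b - Real.arsinh (b / β) * (a - b) := by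
    linarith
  rw [mul_comm, ← div_le_iff₀ h2K]
  exact h3

/-- Lower bound: the squared ℓ₂ distance is controlled by the Bregman divergence
of the hypentropy mirror map. -/
theorem hypentropy_bregman_lower_bound (n : ℕ) (β : ℝ) (hβ : 0 < β)
    (Φ : (Fin n → ℝ) → ℝ)
    (hΦ : ∀ y : Fin n → ℝ,
      Φ y = ∑ i, (y i * Real.arsinh (y i / β) - Real.sqrt ((y i) ^ 2 + β ^ 2)))
    (xs x : Fin n → ℝ) :
    ∑ i, (x i - xs i) ^ 2 ≤
      2 * Real.sqrt (max (⨆ i, (x i) ^ 2) (⨆ i, (xs i) ^ 2) + β ^ 2) *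
        (Φ xs - Φ x - fderiv ℝ Φ x (fun i => xs i - x i)) := by
  have hΦfun : Φ = fun y => ∑ i, hypf β (y i) := by
    funext y; rw [hΦ]; rfl
  set L : (Fin n → ℝ) →L[ℝ] ℝ :=
    ∑ i, Real.arsinh (x i / β) • (ContinuousLinearMap.proj i : (Fin n → ℝ) →L[ℝ] ℝ) with hL
  have hF : HasFDerivAt Φ L x := by
    rw [hΦfun, hL]
    apply HasFDerivAt.fun_sum
    intro i _
    have hproj : HasFDerivAt (fun y : Fin n → ℝ => y i)
        (ContinuousLinearMap.proj i : (Fin n → ℝ) →L[ℝ] ℝ) x :=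
      (ContinuousLinearMap.proj i : (Fin n → ℝ) →L[ℝ] ℝ).hasFDerivAt
    exact (hasDerivAt_hypf β (x i) hβ).comp_hasFDerivAt x hproj
  have hLapp : L (fun i => xs i - x i) = ∑ i, Real.arsinh (x i / β) * (xs i - x i) := by
    rw [hL]
    simp [ContinuousLinearMap.sum_apply, ContinuousLinearMap.proj_apply]
  set M := max (⨆ i, (x i) ^ 2) (⨆ i, (xs i) ^ 2) with hM
  have hM0 : 0 ≤ M := le_trans (Real.iSup_nonneg fun i => sq_nonneg (x i)) (le_max_left _ _)
  have hD : Φ xs - Φ x - fderiv ℝ Φ x (fun i => xs i - x i)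
      = ∑ i, (hypf β (xs i) - hypf β (x i) - Real.arsinh (x i / β) * (xs i - x i)) := by
    rw [hF.fderiv, hLapp, hΦfun]
    simp only [Finset.sum_sub_distrib]
  rw [hD, Finset.mul_sum]
  apply Finset.sum_le_sum
  intro i _
  have hxi : (x i) ^ 2 ≤ M :=
    le_trans (le_ciSup (Set.Finite.bddAbove (Set.finite_range (fun j => x j ^ 2))) i)
      (le_max_left _ _)
  have hxsi : (xs i) ^ 2 ≤ M :=
    le_trans (le_ciSup (Set.Finite.bddAbove (Set.finite_range (fun j => xs j ^ 2))) i)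
      (le_max_right _ _)
  have := key_ineq β M (xs i) (x i) hβ hM0 hxsi hxi
  have hsq : (x i - xs i) ^ 2 = (xs i - x i) ^ 2 := by ring
  rw [hsq]
  exact this
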